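/- Let G be a graph on [n] and v a vertex. Then J_G = J_{G_v} ∩ ((x_v, y_v) + J_{G−v}), where G_v is obtained from G by completing the neighborhood of v. -/

import Mathlib

open SimpleGraph

def completeNeighborhood {V : Type} (G : SimpleGraph V) (v : V) : SimpleGraph V where
  Adj u w := G.Adj u w ∨ (u ≠ w ∧ G.Adj v u ∧ G.Adj v w)
  symm := by
    refine ⟨fun a b h => ?_⟩
    rcases h with h | ⟨h1, h2, h3⟩
    · exact Or.inl h.symm
    · exact Or.inr ⟨h1.symm, h3, h2⟩
  loopless := by
    refine ⟨fun a h => ?_⟩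
    rcases h with h | ⟨h, -⟩
    · exact G.irrefl h
    · exact h rfl

abbrev deleteVert {V : Type} (G : SimpleGraph V) (x : V) :
    SimpleGraph ({x}ᶜ : Set V) :=
  G.induce ({x}ᶜ : Set V)

def IsSimplicial {V : Type} (G : SimpleGraph V) (v : V) : Prop :=
  G.IsClique (G.neighborSet v)

noncomputable def fval {V : Type} (G : SimpleGraph V) : ℕ :=
  {v | IsSimplicial G v}.ncard

noncomputable def ivval {V : Type} (G : SimpleGraph V) : ℕ :=
  {v | ¬ IsSimplicial G v}.ncard

noncomputable def dval {V : Type} (G : SimpleGraph V) : ℕ :=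
  {v | ∀ u, ¬ G.Adj v u}.ncard +
    ∑ᶠ c : G.ConnectedComponent, (G.induce c.supp).diam

open SimpleGraph MvPolynomial

noncomputable section

abbrev PolyS (K : Type) [Field K] (n : ℕ) : Type := MvPolynomial (Fin n ⊕ Fin n) K

def xv {K : Type} [Field K] {n : ℕ} (i : Fin n) : PolyS K n := X (Sum.inl i)
def yv {K : Type} [Field K] {n : ℕ} (i : Fin n) : PolyS K n := X (Sum.inr i)

/-- The binomial `x_i y_j - x_j y_i`. -/
def fij {K : Type} [Field K] {n : ℕ} (i j : Fin n) : PolyS K n :=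
  xv i * yv j - xv j * yv i

/-- The ideal generated by the binomials `f_{ij}` for all pairs related by `r`. -/
def relIdeal (K : Type) [Field K] {n : ℕ} (r : Fin n → Fin n → Prop) :
    Ideal (PolyS K n) :=
  Ideal.span {g | ∃ i j, r i j ∧ g = fij i j}

/-- The binomial edge ideal of a graph `G` on `[n]`. -/
def beIdeal (K : Type) [Field K] {n : ℕ} (G : SimpleGraph (Fin n)) :
    Ideal (PolyS K n) :=
  relIdeal K G.Adj

/-- Depth of a ring with respect to an ideal `I`: the supremum of lengths of
regular sequences consisting of elements of `I`. -/
def ringDepth (R : Type) [CommRing R] (I : Ideal R) : ℕ :=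
  sSup {k | ∃ rs : List R, rs.length = k ∧ (∀ r ∈ rs, r ∈ I) ∧
    RingTheory.Sequence.IsRegular R rs}

/-- The depth of `S/J_G` with respect to the maximal homogeneous ideal. -/
def beDepth (K : Type) [Field K] {n : ℕ} (G : SimpleGraph (Fin n)) : ℕ :=
  ringDepth (PolyS K n ⧸ beIdeal K G)
    (Ideal.map (Ideal.Quotient.mk (beIdeal K G))
      (Ideal.span (Set.range (X : (Fin n ⊕ Fin n) → PolyS K n))))

end

section OhtaniHelpers

variable {K : Type} [Field K] {n : ℕ}

/-- The substitution sending `x_v, y_v` to `0` and fixing all other variables. -/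
noncomputable def phiv (K : Type) [Field K] {n : ℕ} (v : Fin n) :
    PolyS K n →ₐ[K] PolyS K n :=
  aeval (fun s => if s = Sum.inl v ∨ s = Sum.inr v then 0 else X s)

lemma phiv_X (v : Fin n) (s : Fin n ⊕ Fin n) :
    phiv K v (X s) = if s = Sum.inl v ∨ s = Sum.inr v then 0 else X s :=
  aeval_X _ _

lemma phiv_xv (v i : Fin n) :
    phiv K v (xv i) = if i = v then 0 else xv i := by
  unfold xv
  rw [phiv_X]
  by_cases h : i = v <;> simp [h]

lemma phiv_yv (v i : Fin n) :
    phiv K v (yv i) = if i = v then 0 else yv i := by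
  unfold yv
  rw [phiv_X]
  by_cases h : i = v <;> simp [h]

lemma phiv_fij_eq {v i j : Fin n} (hi : i ≠ v) (hj : j ≠ v) :
    phiv K v (fij i j) = fij i j := by
  unfold fij
  rw [map_sub, map_mul, map_mul, phiv_xv, phiv_xv, phiv_yv, phiv_yv]
  simp [hi, hj]

lemma phiv_fij_zero {v i j : Fin n} (h : i = v ∨ j = v) :
    phiv K v (fij i j) = 0 := by
  unfold fij
  rw [map_sub, map_mul, map_mul, phiv_xv, phiv_xv, phiv_yv, phiv_yv]
  rcases h with h | h <;> simp [h]

lemma sub_phiv_mem (v : Fin n) (p : PolyS K n) :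
    p - phiv K v p ∈ Ideal.span {xv v, yv v} := by
  induction p using MvPolynomial.induction_on with
  | C a =>
      simp only [phiv, aeval_C, algebraMap_eq, sub_self]
      exact Ideal.zero_mem _
  | add p q hp hq =>
      have := Ideal.add_mem _ hp hq
      rw [map_add]
      convert this using 1
      ring
  | mul_X p s hp =>
      rw [map_mul, phiv_X]
      by_cases hs : s = Sum.inl v ∨ s = Sum.inr v
      · rw [if_pos hs, mul_zero, sub_zero]
        have hx : X s ∈ Ideal.span ({xv v, yv v} : Set (PolyS K n)) := by
          rcases hs with h | h <;> subst h
          · exact Ideal.subset_span (Or.inl rfl)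
          · exact Ideal.subset_span (Or.inr rfl)
        exact Ideal.mul_mem_left _ _ hx
      · rw [if_neg hs]
        have : p * X s - phiv K v p * X s = (p - phiv K v p) * X s := by ring
        rw [this]
        exact Ideal.mul_mem_right _ _ hp

lemma phiv_eq_zero_of_mem (v : Fin n) {a : PolyS K n}
    (ha : a ∈ Ideal.span ({xv v, yv v} : Set (PolyS K n))) : phiv K v a = 0 := by
  refine Submodule.span_induction (fun x hx => ?_) (map_zero _)
    (fun x y _ _ hx hy => by rw [map_add, hx, hy, add_zero])
    (fun c x _ hx => by rw [smul_eq_mul, map_mul, hx, mul_zero]) ha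
  rcases hx with h | h <;> subst h
  · rw [phiv_xv]; simp
  · rw [phiv_yv]; simp

lemma fij_mem_of_adj {G : SimpleGraph (Fin n)} {i j : Fin n} (h : G.Adj i j) :
    fij (K := K) i j ∈ beIdeal K G :=
  Ideal.subset_span ⟨i, j, h, rfl⟩

lemma xv_mul_fij (v i j : Fin n) :
    xv (K := K) v * fij i j = xv i * fij v j - xv j * fij v i := by
  unfold fij xv yv; ring

lemma yv_mul_fij (v i j : Fin n) :
    yv (K := K) v * fij i j = yv i * fij v j - yv j * fij v i := by
  unfold fij xv yv; ring

lemma span_xy_mul_mem {v : Fin n} {I : Ideal (PolyS K n)} {q h : PolyS K n}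
    (hq : q ∈ Ideal.span ({xv v, yv v} : Set (PolyS K n)))
    (hx : xv v * h ∈ I) (hy : yv v * h ∈ I) : q * h ∈ I := by
  refine Submodule.span_induction (fun x hxm => ?_) (by simp)
    (fun x y _ _ hxh hyh => by rw [add_mul]; exact I.add_mem hxh hyh)
    (fun c x _ hxh => by rw [smul_eq_mul, mul_assoc]; exact Ideal.mul_mem_left _ _ hxh) hq
  rcases hxm with h' | h' <;> subst h'
  · exact hx
  · exact hy

/-- Key claim: for `g ∈ J_{G_v}`, `g - φ(g) ∈ J_G` and `x_v φ(g), y_v φ(g) ∈ J_G`. -/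
lemma claim1 {G : SimpleGraph (Fin n)} {v : Fin n} {g : PolyS K n}
    (hg : g ∈ beIdeal K (completeNeighborhood G v)) :
    g - phiv K v g ∈ beIdeal K G ∧ xv v * phiv K v g ∈ beIdeal K G ∧
      yv v * phiv K v g ∈ beIdeal K G := by
  refine Submodule.span_induction (fun x hx => ?_)
    (by simp) ?_ ?_ hg
  · obtain ⟨i, j, hadj, rfl⟩ := hx
    by_cases hv : i = v ∨ j = v
    · have hGadj : G.Adj i j := by
        rcases hadj with h | ⟨hne, h1, h2⟩
        · exact h
        · exfalso
          rcases hv with h | h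
          · exact G.irrefl (v := v) (h ▸ h1)
          · exact G.irrefl (v := v) (h ▸ h2)
      rw [phiv_fij_zero hv]
      simp only [sub_zero, mul_zero]
      exact ⟨fij_mem_of_adj hGadj, (beIdeal K G).zero_mem, (beIdeal K G).zero_mem⟩
    · push_neg at hv
      rw [phiv_fij_eq hv.1 hv.2]
      refine ⟨by simp, ?_, ?_⟩
      · rcases hadj with h | ⟨hne, h1, h2⟩
        · exact Ideal.mul_mem_left _ _ (fij_mem_of_adj h)
        · rw [xv_mul_fij]
          exact Ideal.sub_mem _ (Ideal.mul_mem_left _ _ (fij_mem_of_adj h2))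
            (Ideal.mul_mem_left _ _ (fij_mem_of_adj h1))
      · rcases hadj with h | ⟨hne, h1, h2⟩
        · exact Ideal.mul_mem_left _ _ (fij_mem_of_adj h)
        · rw [yv_mul_fij]
          exact Ideal.sub_mem _ (Ideal.mul_mem_left _ _ (fij_mem_of_adj h2))
            (Ideal.mul_mem_left _ _ (fij_mem_of_adj h1))
  · rintro x y _ _ ⟨hx1, hx2, hx3⟩ ⟨hy1, hy2, hy3⟩
    refine ⟨?_, ?_, ?_⟩
    · rw [map_add]
      have := Ideal.add_mem _ hx1 hy1
      convert this using 1; ring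
    · rw [map_add, mul_add]; exact Ideal.add_mem _ hx2 hy2
    · rw [map_add, mul_add]; exact Ideal.add_mem _ hx3 hy3
  · rintro p x _ ⟨hx1, hx2, hx3⟩
    rw [smul_eq_mul]
    refine ⟨?_, ?_, ?_⟩
    · rw [map_mul]
      have key : p * x - phiv K v p * phiv K v x =
          p * (x - phiv K v x) + (p - phiv K v p) * phiv K v x := by ring
      rw [key]
      exact Ideal.add_mem _ (Ideal.mul_mem_left _ _ hx1)
        (span_xy_mul_mem (sub_phiv_mem v p) hx2 hx3)
    · rw [map_mul, mul_left_comm]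
      exact Ideal.mul_mem_left _ _ hx2
    · rw [map_mul, mul_left_comm]
      exact Ideal.mul_mem_left _ _ hx3

lemma claim2 {G : SimpleGraph (Fin n)} {v : Fin n} {g : PolyS K n}
    (hg : g ∈ Ideal.span ({xv v, yv v} : Set (PolyS K n)) +
      relIdeal K (fun i j => G.Adj i j ∧ i ≠ v ∧ j ≠ v)) :
    phiv K v g ∈ relIdeal K (fun i j => G.Adj i j ∧ i ≠ v ∧ j ≠ v) := by
  rw [Ideal.add_eq_sup, Submodule.mem_sup] at hg
  obtain ⟨a, ha, b, hb, rfl⟩ := hg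
  rw [map_add, phiv_eq_zero_of_mem v ha, zero_add]
  refine Submodule.span_induction (fun x hx => ?_) (by simp)
    (fun x y _ _ hx hy => by rw [map_add]; exact Ideal.add_mem _ hx hy)
    (fun c x _ hx => by rw [smul_eq_mul, map_mul]; exact Ideal.mul_mem_left _ _ hx) hb
  obtain ⟨i, j, ⟨hadj, hi, hj⟩, rfl⟩ := hx
  rw [phiv_fij_eq hi hj]
  exact Ideal.subset_span ⟨i, j, ⟨hadj, hi, hj⟩, rfl⟩

lemma relIdeal_le {G : SimpleGraph (Fin n)} {v : Fin n} :
    relIdeal K (fun i j => G.Adj i j ∧ i ≠ v ∧ j ≠ v) ≤ beIdeal K G := by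
  refine Ideal.span_le.mpr ?_
  rintro g ⟨i, j, ⟨h, _, _⟩, rfl⟩
  exact Ideal.subset_span ⟨i, j, h, rfl⟩

end OhtaniHelpers

/-- `J_G = J_{G_v} ∩ ((x_v, y_v) + J_{G - v})`. -/
theorem stmt11 (K : Type) [Field K] {n : ℕ} (G : SimpleGraph (Fin n)) (v : Fin n) :
    beIdeal K G =
      beIdeal K (completeNeighborhood G v) ⊓
        (Ideal.span {xv v, yv v} +
          relIdeal K (fun i j => G.Adj i j ∧ i ≠ v ∧ j ≠ v)) := by
  apply le_antisymm
  · refine le_inf ?_ ?_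
    · refine Ideal.span_le.mpr ?_
      rintro g ⟨i, j, h, rfl⟩
      exact Ideal.subset_span ⟨i, j, Or.inl h, rfl⟩
    · refine Ideal.span_le.mpr ?_
      rintro g ⟨i, j, h, rfl⟩
      rw [Ideal.add_eq_sup]
      by_cases hi : i = v
      · subst hi
        refine Ideal.mem_sup_left ?_
        unfold fij
        exact Ideal.sub_mem _
          (Ideal.mul_mem_right _ _ (Ideal.subset_span (Or.inl rfl)))
          (Ideal.mul_mem_left _ _ (Ideal.subset_span (Or.inr rfl)))
      · by_cases hj : j = v
        · subst hj
          refine Ideal.mem_sup_left ?_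
          unfold fij
          exact Ideal.sub_mem _
            (Ideal.mul_mem_left _ _ (Ideal.subset_span (Or.inr rfl)))
            (Ideal.mul_mem_right _ _ (Ideal.subset_span (Or.inl rfl)))
        · exact Ideal.mem_sup_right (Ideal.subset_span ⟨i, j, ⟨h, hi, hj⟩, rfl⟩)
  · rintro g ⟨h1, h2⟩
    obtain ⟨hg1, -, -⟩ := claim1 h1
    have hg2 := relIdeal_le (claim2 h2)
    have := Ideal.add_mem _ hg1 hg2
    simpa using this
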